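/- arXiv:2412.20031 — 2 statements merged into one kernel-verified Lean document; each statement's English description precedes it below -/
import Mathlib

section
/- For n ≥ 1, the signed count over all overpartitions π of n that contain at least one non-overlined part, weighted by (-1)^{ℓ_{O≤N}(π)}, equals D(n), the number of partitions of n into distinct parts. Here ℓ_{O≤N}(π) is the number of overlined parts of π of size less than or equal to the size of the largest non-overlined part of π. -/
open scoped Classical

/-- An overpartition of `n`: a finite set of overlined part sizes (the first
occurrence of a size may be overlined, so overlined parts are distinct)
together with a multiset of non-overlined parts, all parts positive,
with total sum `n`. -/
structure Overpartition (n : ℕ) where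
  overlined : Finset ℕ
  plain : Multiset ℕ
  over_pos : ∀ x ∈ overlined, 0 < x
  plain_pos : ∀ x ∈ plain, 0 < x
  sum_eq : (∑ x ∈ overlined, x) + plain.sum = n
namespace Overpartition

variable {n : ℕ}

@[ext] lemma ext {π₁ π₂ : Overpartition n} (h1 : π₁.overlined = π₂.overlined)
    (h2 : π₁.plain = π₂.plain) : π₁ = π₂ := by
  cases π₁; cases π₂; simp_all

lemma card_le_sum (s : Multiset ℕ) (h : ∀ x ∈ s, 0 < x) : Multiset.card s ≤ s.sum := by
  induction s using Multiset.induction with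
  | empty => simp
  | cons a s ih =>
    simp only [Multiset.card_cons, Multiset.sum_cons]
    have ha := h a (Multiset.mem_cons_self a s)
    have := ih (fun x hx => h x (Multiset.mem_cons_of_mem hx))
    omega

lemma plain_sum_le (π : Overpartition n) : π.plain.sum ≤ n := by
  have := π.sum_eq; omega

lemma over_sum_le (π : Overpartition n) : (∑ x ∈ π.overlined, x) ≤ n := by
  have := π.sum_eq; omega

lemma mem_plain_le (π : Overpartition n) {x : ℕ} (hx : x ∈ π.plain) : x ≤ n :=
  le_trans (Multiset.single_le_sum (fun y _ => Nat.zero_le y) x hx) π.plain_sum_le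

lemma mem_over_le (π : Overpartition n) {x : ℕ} (hx : x ∈ π.overlined) : x ≤ n :=
  le_trans (Finset.single_le_sum (fun y _ => Nat.zero_le y) hx) π.over_sum_le

lemma count_plain_le (π : Overpartition n) (x : ℕ) : π.plain.count x ≤ n :=
  le_trans (Multiset.count_le_card x _) (le_trans (card_le_sum _ π.plain_pos) π.plain_sum_le)

noncomputable instance : Fintype (Overpartition n) := by
  have : Finite (Overpartition n) := by
    apply Finite.of_injective
      (fun π : Overpartition n =>
        ((fun i : Fin (n+1) => decide ((i : ℕ) ∈ π.overlined),
          fun i : Fin (n+1) => (⟨π.plain.count (i : ℕ), Nat.lt_succ_of_le (π.count_plain_le i)⟩ : Fin (n+1)))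
          : (Fin (n+1) → Bool) × (Fin (n+1) → Fin (n+1))))
    intro π₁ π₂ h
    obtain ⟨ho, hp⟩ := Prod.mk.injEq .. ▸ h
    ext x
    · by_cases hx : x ≤ n
      · have := congrFun ho ⟨x, Nat.lt_succ_of_le hx⟩
        simpa using this
      · constructor <;> intro hm
        · exact absurd (π₁.mem_over_le hm) hx
        · exact absurd (π₂.mem_over_le hm) hx
    · by_cases hx : x ≤ n
      · have := congrFun hp ⟨x, Nat.lt_succ_of_le hx⟩
        simpa [Fin.ext_iff] using this
      · rw [Multiset.count_eq_zero_of_notMem, Multiset.count_eq_zero_of_notMem]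
        · intro hm; exact hx (π₂.mem_plain_le hm)
        · intro hm; exact hx (π₁.mem_plain_le hm)
  exact Fintype.ofFinite _


/-- The largest non-overlined part (junk value 0 if there is none). -/
noncomputable def N (π : Overpartition n) : ℕ :=
  if h : π.plain = 0 then 0 else π.plain.toFinset.max' (Multiset.toFinset_nonempty.mpr h)

lemma N_mem {π : Overpartition n} (h : π.plain ≠ 0) : π.N ∈ π.plain := by
  rw [N, dif_neg h, ← Multiset.mem_toFinset]
  exact Finset.max'_mem _ _

lemma le_N {π : Overpartition n} (h : π.plain ≠ 0) {y : ℕ} (hy : y ∈ π.plain) : y ≤ π.N := by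
  rw [N, dif_neg h]
  exact Finset.le_max' _ _ (Multiset.mem_toFinset.mpr hy)

lemma N_eq {π : Overpartition n} {m : ℕ} (hm : m ∈ π.plain) (hub : ∀ y ∈ π.plain, y ≤ m) :
    π.N = m := by
  have h : π.plain ≠ 0 := by intro h0; rw [h0] at hm; simp at hm
  exact le_antisymm (hub _ (N_mem h)) (le_N h hm)

lemma exists_iff_le_N {π : Overpartition n} (h : π.plain ≠ 0) (x : ℕ) :
    (∃ y ∈ π.plain, x ≤ y) ↔ x ≤ π.N := by
  constructor
  · rintro ⟨y, hy, hxy⟩; exact le_trans hxy (le_N h hy)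
  · intro hx; exact ⟨π.N, N_mem h, hx⟩

/-- The set of "togglable" values. -/
noncomputable def Vset (π : Overpartition n) : Finset ℕ :=
  π.overlined.filter (fun v => v ≤ π.N) ∪
    π.plain.toFinset.filter (fun v => v ∉ π.overlined ∧ (v < π.N ∨ 2 ≤ π.plain.count v))

lemma mem_Vset {π : Overpartition n} {v : ℕ} :
    v ∈ π.Vset ↔ (v ∈ π.overlined ∧ v ≤ π.N) ∨
      (v ∈ π.plain ∧ v ∉ π.overlined ∧ (v < π.N ∨ 2 ≤ π.plain.count v)) := by
  simp [Vset, Multiset.mem_toFinset, and_assoc]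

lemma Vset_pos {π : Overpartition n} {v : ℕ} (hv : v ∈ π.Vset) : 0 < v := by
  rcases mem_Vset.mp hv with ⟨h, _⟩ | ⟨h, _⟩
  · exact π.over_pos v h
  · exact π.plain_pos v h

lemma Vset_le_N {π : Overpartition n} (h : π.plain ≠ 0) {v : ℕ} (hv : v ∈ π.Vset) : v ≤ π.N := by
  rcases mem_Vset.mp hv with ⟨_, h2⟩ | ⟨h1, _⟩
  · exact h2
  · exact le_N h h1


lemma mem_plain_of_not_over {π : Overpartition n} {v : ℕ} (hvV : v ∈ π.Vset)
    (hv : v ∉ π.overlined) : v ∈ π.plain ∧ (v < π.N ∨ 2 ≤ π.plain.count v) := by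
  rcases mem_Vset.mp hvV with ⟨h, _⟩ | ⟨h1, _, h3⟩
  · exact absurd h hv
  · exact ⟨h1, h3⟩

/-- The sign-reversing involution: toggle the overline status of the largest
togglable value. -/
noncomputable def toggle (π : Overpartition n) (h2 : π.Vset.Nonempty) : Overpartition n :=
  if hv : π.Vset.max' h2 ∈ π.overlined then
    { overlined := π.overlined.erase (π.Vset.max' h2)
      plain := (π.Vset.max' h2) ::ₘ π.plain
      over_pos := fun x hx => π.over_pos x (Finset.mem_of_mem_erase hx)
      plain_pos := fun x hx => by
        rcases Multiset.mem_cons.mp hx with rfl | hx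
        · exact Vset_pos (Finset.max'_mem _ h2)
        · exact π.plain_pos x hx
      sum_eq := by
        have h := Finset.sum_erase_add π.overlined id hv
        have h' := π.sum_eq
        simp only [id] at h
        simp only [Multiset.sum_cons]
        omega }
  else
    { overlined := insert (π.Vset.max' h2) π.overlined
      plain := π.plain.erase (π.Vset.max' h2)
      over_pos := fun x hx => by
        rcases Finset.mem_insert.mp hx with rfl | hx
        · exact Vset_pos (Finset.max'_mem _ h2)
        · exact π.over_pos x hx
      plain_pos := fun x hx => π.plain_pos x (Multiset.mem_of_mem_erase hx)
      sum_eq := by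
        have hp : π.Vset.max' h2 ∈ π.plain :=
          (mem_plain_of_not_over (Finset.max'_mem _ h2) hv).1
        have h := congrArg Multiset.sum (Multiset.cons_erase hp)
        simp only [Multiset.sum_cons] at h
        rw [Finset.sum_insert hv]
        have h' := π.sum_eq
        omega }

variable {π : Overpartition n} {h2 : π.Vset.Nonempty}

lemma toggle_over_pos (hv : π.Vset.max' h2 ∈ π.overlined) :
    (π.toggle h2).overlined = π.overlined.erase (π.Vset.max' h2) := by
  rw [toggle, dif_pos hv]

lemma toggle_plain_pos (hv : π.Vset.max' h2 ∈ π.overlined) :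
    (π.toggle h2).plain = (π.Vset.max' h2) ::ₘ π.plain := by
  rw [toggle, dif_pos hv]

lemma toggle_over_neg (hv : π.Vset.max' h2 ∉ π.overlined) :
    (π.toggle h2).overlined = insert (π.Vset.max' h2) π.overlined := by
  rw [toggle, dif_neg hv]

lemma toggle_plain_neg (hv : π.Vset.max' h2 ∉ π.overlined) :
    (π.toggle h2).plain = π.plain.erase (π.Vset.max' h2) := by
  rw [toggle, dif_neg hv]

lemma toggle_N_spec (h1 : π.plain ≠ 0) :
    π.N ∈ (π.toggle h2).plain ∧ ∀ y ∈ (π.toggle h2).plain, y ≤ π.N := by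
  set v := π.Vset.max' h2 with hv_def
  have hvV : v ∈ π.Vset := Finset.max'_mem _ h2
  have hvN : v ≤ π.N := Vset_le_N h1 hvV
  by_cases hv : v ∈ π.overlined
  · rw [toggle_plain_pos hv]
    constructor
    · exact Multiset.mem_cons_of_mem (N_mem h1)
    · intro y hy
      rcases Multiset.mem_cons.mp hy with rfl | hy
      · exact hvN
      · exact le_N h1 hy
  · obtain ⟨hvp, hcond⟩ := mem_plain_of_not_over hvV hv
    rw [toggle_plain_neg hv]
    constructor
    · rcases hcond with hlt | hcnt
      · exact (Multiset.mem_erase_of_ne (by omega)).mpr (N_mem h1)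
      · by_cases hvN' : v = π.N
        · rw [← hvN']
          rw [← Multiset.count_pos, Multiset.count_erase_self]
          omega
        · exact (Multiset.mem_erase_of_ne (fun h => hvN' h.symm)).mpr (N_mem h1)
    · intro y hy
      exact le_N h1 (Multiset.mem_of_mem_erase hy)

lemma toggle_plain_ne (h1 : π.plain ≠ 0) : (π.toggle h2).plain ≠ 0 := by
  intro h0
  have := (toggle_N_spec (h2 := h2) h1).1
  rw [h0] at this
  simp at this

lemma N_toggle (h1 : π.plain ≠ 0) : (π.toggle h2).N = π.N :=
  N_eq (toggle_N_spec h1).1 (toggle_N_spec h1).2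

lemma Vset_toggle (h1 : π.plain ≠ 0) : (π.toggle h2).Vset = π.Vset := by
  set v := π.Vset.max' h2 with hv_def
  have hvV : v ∈ π.Vset := Finset.max'_mem _ h2
  have hvN : v ≤ π.N := Vset_le_N h1 hvV
  ext w
  rw [mem_Vset, mem_Vset, N_toggle h1]
  by_cases hv : v ∈ π.overlined
  · rw [toggle_over_pos hv, toggle_plain_pos hv]
    by_cases hw : w = v
    · subst hw
      have hA : v ∈ π.Vset.max' h2 ::ₘ π.plain ∧ v ∉ π.overlined.erase (π.Vset.max' h2) ∧
          (v < π.N ∨ 2 ≤ Multiset.count v (π.Vset.max' h2 ::ₘ π.plain)) := by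
        refine ⟨by rw [← hv_def]; exact Multiset.mem_cons_self _ _,
          by rw [← hv_def]; exact Finset.notMem_erase _ _, ?_⟩
        have hcnt : Multiset.count v (π.Vset.max' h2 ::ₘ π.plain) =
            Multiset.count v π.plain + 1 := by
          rw [← hv_def, Multiset.count_cons_self]
        rcases lt_or_eq_of_le hvN with hlt | heq
        · exact Or.inl hlt
        · have h0 : 0 < Multiset.count v π.plain :=
            Multiset.count_pos.mpr (by rw [heq]; exact N_mem h1)
          omega
      exact iff_of_true (Or.inr hA) (Or.inl ⟨hv, hvN⟩)
    · simp only [← hv_def, Finset.mem_erase, Multiset.mem_cons, Multiset.count_cons_of_ne hw, hw,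
        false_or, ne_eq, not_false_iff, true_and]
  · obtain ⟨hvp, hcond⟩ := mem_plain_of_not_over hvV hv
    rw [toggle_over_neg hv, toggle_plain_neg hv]
    by_cases hw : w = v
    · subst hw
      refine iff_of_true ?_ ?_
      · exact Or.inl ⟨Finset.mem_insert_self _ _, hvN⟩
      · exact Or.inr ⟨hvp, hv, hcond⟩
    · simp only [← hv_def, Finset.mem_insert, hw, false_or, Multiset.mem_erase_of_ne hw,
        Multiset.count_erase_of_ne hw]

lemma toggle_max' (h1 : π.plain ≠ 0) (h2' : (π.toggle h2).Vset.Nonempty) :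
    (π.toggle h2).Vset.max' h2' = π.Vset.max' h2 := by
  simp only [Vset_toggle h1]

lemma toggle_toggle (h1 : π.plain ≠ 0) (h2' : (π.toggle h2).Vset.Nonempty) :
    (π.toggle h2).toggle h2' = π := by
  have hmax := toggle_max' (h2 := h2) h1 h2'
  set v := π.Vset.max' h2 with hv_def
  by_cases hv : v ∈ π.overlined
  · have hv' : (π.toggle h2).Vset.max' h2' ∉ (π.toggle h2).overlined := by
      rw [hmax, toggle_over_pos hv]
      exact Finset.notMem_erase _ _
    ext1
    · rw [toggle_over_neg hv', hmax, toggle_over_pos hv, Finset.insert_erase hv]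
    · rw [toggle_plain_neg hv', hmax, toggle_plain_pos hv, Multiset.erase_cons_head]
  · have hvp : v ∈ π.plain := (mem_plain_of_not_over (Finset.max'_mem _ h2) hv).1
    have hv' : (π.toggle h2).Vset.max' h2' ∈ (π.toggle h2).overlined := by
      rw [hmax, toggle_over_neg hv]
      exact Finset.mem_insert_self _ _
    ext1
    · rw [toggle_over_pos hv', hmax, toggle_over_neg hv, Finset.erase_insert hv]
    · rw [toggle_plain_pos hv', hmax, toggle_plain_neg hv, Multiset.cons_erase hvp]

lemma toggle_ne : π.toggle h2 ≠ π := by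
  intro heq
  have hov := congrArg Overpartition.overlined heq
  by_cases hv : π.Vset.max' h2 ∈ π.overlined
  · rw [toggle_over_pos hv] at hov
    exact Finset.notMem_erase _ _ (hov ▸ hv)
  · rw [toggle_over_neg hv] at hov
    exact hv (hov ▸ Finset.mem_insert_self _ _)

/-- The statistic: number of overlined parts of size at most `N`. -/
noncomputable def ell (π : Overpartition n) : ℕ :=
  (π.overlined.filter (fun x => ∃ y ∈ π.plain, x ≤ y)).card

lemma ell_eq (h1 : π.plain ≠ 0) :
    π.ell = (π.overlined.filter (fun x => x ≤ π.N)).card := by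
  unfold ell
  congr 1
  apply Finset.filter_congr
  intro x _
  simp only [exists_iff_le_N h1]

lemma ell_toggle (h1 : π.plain ≠ 0) :
    (π.toggle h2).ell = π.ell + 1 ∨ π.ell = (π.toggle h2).ell + 1 := by
  rw [ell_eq h1, ell_eq (toggle_plain_ne h1), N_toggle h1]
  set v := π.Vset.max' h2 with hv_def
  have hvN : v ≤ π.N := Vset_le_N h1 (Finset.max'_mem _ h2)
  by_cases hv : v ∈ π.overlined
  · right
    have hmemf : v ∈ π.overlined.filter (fun x => x ≤ π.N) := Finset.mem_filter.mpr ⟨hv, hvN⟩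
    rw [toggle_over_pos hv, Finset.filter_erase, Finset.card_erase_of_mem hmemf]
    have : 0 < (π.overlined.filter (fun x => x ≤ π.N)).card := Finset.card_pos.mpr ⟨v, hmemf⟩
    omega
  · left
    rw [toggle_over_neg hv, Finset.filter_insert, if_pos hvN,
      Finset.card_insert_of_notMem (fun hm => hv (Finset.mem_filter.mp hm).1)]

lemma ell_of_fix (h1 : π.plain ≠ 0) (hfix : π.Vset = ∅) : π.ell = 0 := by
  rw [ell_eq h1, Finset.card_eq_zero]
  rw [Finset.eq_empty_iff_forall_notMem]
  intro x hx
  obtain ⟨hx1, hx2⟩ := Finset.mem_filter.mp hx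
  have : x ∈ π.Vset := mem_Vset.mpr (Or.inl ⟨hx1, hx2⟩)
  rw [hfix] at this
  simp at this

lemma over_of_fix (hfix : π.Vset = ∅) : ∀ x ∈ π.overlined, π.N < x := by
  intro x hx
  by_contra hle
  have : x ∈ π.Vset := mem_Vset.mpr (Or.inl ⟨hx, by omega⟩)
  rw [hfix] at this
  simp at this

lemma plain_of_fix (h1 : π.plain ≠ 0) (hfix : π.Vset = ∅) : π.plain = {π.N} := by
  have hN := N_mem h1
  have hall : ∀ w ∈ π.plain, w = π.N := by
    intro w hw
    by_contra hne
    have hwN : w < π.N := lt_of_le_of_ne (le_N h1 hw) hne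
    have hwo : w ∉ π.overlined := fun hmem => by
      have : w ∈ π.Vset := mem_Vset.mpr (Or.inl ⟨hmem, le_of_lt hwN⟩)
      rw [hfix] at this; simp at this
    have : w ∈ π.Vset := mem_Vset.mpr (Or.inr ⟨hw, hwo, Or.inl hwN⟩)
    rw [hfix] at this; simp at this
  have hNo : π.N ∉ π.overlined := fun hmem => by
    have : π.N ∈ π.Vset := mem_Vset.mpr (Or.inl ⟨hmem, le_refl _⟩)
    rw [hfix] at this; simp at this
  have hcnt : π.plain.count π.N ≤ 1 := by
    by_contra hc
    have : π.N ∈ π.Vset := mem_Vset.mpr (Or.inr ⟨hN, hNo, Or.inr (by omega)⟩)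
    rw [hfix] at this; simp at this
  have hcnt1 : π.plain.count π.N = 1 :=
    le_antisymm hcnt (Multiset.one_le_count_iff_mem.mpr hN)
  have hrep : π.plain = Multiset.replicate (Multiset.card π.plain) π.N :=
    Multiset.eq_replicate_card.mpr hall
  have hcard : Multiset.card π.plain = 1 := by
    have := congrArg (Multiset.count π.N) hrep
    rw [hcnt1, Multiset.count_replicate] at this
    simpa using this.symm
  rw [hrep, hcard]
  rfl

lemma fix_of {m : ℕ} (hplain : π.plain = {m}) (hover : ∀ x ∈ π.overlined, m < x) :
    π.Vset = ∅ := by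
  have hN : π.N = m := N_eq (by rw [hplain]; simp) (by rw [hplain]; simp)
  rw [Finset.eq_empty_iff_forall_notMem]
  intro v hv
  rcases mem_Vset.mp hv with ⟨h1, h2⟩ | ⟨h1, h2, h3⟩
  · have := hover v h1; omega
  · rw [hplain] at h1
    have hvm : v = m := by simpa using h1
    subst hvm
    rw [hN, hplain] at h3
    simp [Multiset.count_singleton] at h3

lemma sum_over_val (π : Overpartition n) : ∑ x ∈ π.overlined, x = π.overlined.val.sum := by
  rw [Finset.sum, Multiset.map_id']

/-- The distinct partition associated to a fixed point of the involution. -/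
noncomputable def toPart (π : Overpartition n) (h1 : π.plain ≠ 0)
    (hfix : π.Vset = ∅) : n.Partition where
  parts := π.N ::ₘ π.overlined.val
  parts_pos := by
    intro i hi
    rcases Multiset.mem_cons.mp hi with rfl | hi
    · exact π.plain_pos _ (N_mem h1)
    · exact π.over_pos _ hi
  parts_sum := by
    have hs := π.sum_eq
    rw [sum_over_val] at hs
    have hp : π.plain.sum = π.N := by rw [plain_of_fix h1 hfix]; simp
    rw [Multiset.sum_cons]
    omega

lemma N_singleton {π : Overpartition n} {m : ℕ} (h : π.plain = {m}) : π.N = m :=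
  N_eq (by rw [h]; simp) (by rw [h]; simp)

lemma card_fix (hn : 1 ≤ n) :
    (((Finset.univ.filter (fun π : Overpartition n => π.plain ≠ 0)).filter
      (fun π => π.Vset = ∅)).card : ℤ)
    = (Finset.univ.filter (fun p : n.Partition => p.parts.Nodup)).card := by
  congr 1
  refine Finset.card_bij (fun π hπ => π.toPart
    (Finset.mem_filter.mp (Finset.mem_filter.mp hπ).1).2 (Finset.mem_filter.mp hπ).2)
    ?_ ?_ ?_
  · -- maps to nodup partitions
    intro π hπ
    have h1 : π.plain ≠ 0 := (Finset.mem_filter.mp (Finset.mem_filter.mp hπ).1).2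
    have hfix : π.Vset = ∅ := (Finset.mem_filter.mp hπ).2
    rw [Finset.mem_filter]
    refine ⟨Finset.mem_univ _, ?_⟩
    show (π.N ::ₘ π.overlined.val).Nodup
    rw [Multiset.nodup_cons]
    constructor
    · intro hmem
      exact absurd (over_of_fix hfix _ hmem) (lt_irrefl _)
    · exact π.overlined.nodup
  · -- injective
    intro π₁ h₁ π₂ h₂ heq
    have hfix₁ : π₁.Vset = ∅ := (Finset.mem_filter.mp h₁).2
    have hfix₂ : π₂.Vset = ∅ := (Finset.mem_filter.mp h₂).2
    have hp1 : π₁.plain ≠ 0 := (Finset.mem_filter.mp (Finset.mem_filter.mp h₁).1).2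
    have hp2 : π₂.plain ≠ 0 := (Finset.mem_filter.mp (Finset.mem_filter.mp h₂).1).2
    have hparts : π₁.N ::ₘ π₁.overlined.val = π₂.N ::ₘ π₂.overlined.val :=
      congrArg Nat.Partition.parts heq
    have hNN : π₁.N = π₂.N := by
      have hm1 : π₁.N ∈ π₂.N ::ₘ π₂.overlined.val := hparts ▸ Multiset.mem_cons_self _ _
      have hm2 : π₂.N ∈ π₁.N ::ₘ π₁.overlined.val := hparts ▸ Multiset.mem_cons_self _ _
      rcases Multiset.mem_cons.mp hm1 with h | h
      · exact h
      · rcases Multiset.mem_cons.mp hm2 with h' | h'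
        · exact h'.symm
        · have := over_of_fix hfix₂ _ h
          have := over_of_fix hfix₁ _ h'
          omega
    rw [hNN] at hparts
    have hov : π₁.overlined.val = π₂.overlined.val := by
      exact (Multiset.cons_inj_right _).mp hparts
    ext1
    · exact Finset.val_injective hov
    · rw [plain_of_fix hp1 hfix₁, plain_of_fix hp2 hfix₂, hNN]
  · -- surjective
    intro p hp
    have hnodup : p.parts.Nodup := (Finset.mem_filter.mp hp).2
    have hne : p.parts ≠ 0 := by
      intro h0
      have := p.parts_sum
      rw [h0] at this
      simp at this
      omega
    have hnefin : p.parts.toFinset.Nonempty := Multiset.toFinset_nonempty.mpr hne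
    set m := p.parts.toFinset.min' hnefin with hm_def
    have hm_mem : m ∈ p.parts := Multiset.mem_toFinset.mp (Finset.min'_mem _ _)
    have hm_min : ∀ x ∈ p.parts, m ≤ x := fun x hx =>
      Finset.min'_le _ _ (Multiset.mem_toFinset.mpr hx)
    have hover_lt : ∀ x ∈ (p.parts.erase m).toFinset, m < x := by
      intro x hx
      have hx' : x ∈ p.parts.erase m := Multiset.mem_toFinset.mp hx
      have hxp : x ∈ p.parts := Multiset.mem_of_mem_erase hx'
      have hxm : x ≠ m := by
        intro h; subst h
        exact hnodup.notMem_erase hx'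
      exact lt_of_le_of_ne (hm_min x hxp) (Ne.symm hxm)
    have hval : ((p.parts.erase m).toFinset).val = p.parts.erase m := by
      rw [Multiset.toFinset_val, Multiset.dedup_eq_self]
      exact hnodup.erase m
    have hpos1 : ∀ x ∈ (p.parts.erase m).toFinset, 0 < x := fun x hx =>
      p.parts_pos (Multiset.mem_of_mem_erase (Multiset.mem_toFinset.mp hx))
    have hpos2 : ∀ x ∈ ({m} : Multiset ℕ), 0 < x := by
      intro x hx
      have : x = m := by simpa using hx
      subst this
      exact p.parts_pos hm_mem
    have hsum : (∑ x ∈ (p.parts.erase m).toFinset, x) + ({m} : Multiset ℕ).sum = n := by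
      have hsum1 : ∑ x ∈ (p.parts.erase m).toFinset, x = (p.parts.erase m).sum := by
        rw [Finset.sum, Multiset.map_id', hval]
      rw [hsum1]
      have hsum2 := congrArg Multiset.sum (Multiset.cons_erase hm_mem)
      rw [Multiset.sum_cons] at hsum2
      have hps := p.parts_sum
      simp only [Multiset.sum_singleton]
      omega
    refine ⟨⟨(p.parts.erase m).toFinset, {m}, hpos1, hpos2, hsum⟩, ?_, ?_⟩
    · rw [Finset.mem_filter, Finset.mem_filter]
      refine ⟨⟨Finset.mem_univ _, by simp⟩, ?_⟩
      exact fix_of rfl hover_lt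
    · apply Nat.Partition.ext
      show Overpartition.N _ ::ₘ _ = p.parts
      rw [N_singleton (m := m) rfl]
      show m ::ₘ ((p.parts.erase m).toFinset).val = p.parts
      rw [hval]
      exact Multiset.cons_erase hm_mem
end Overpartition


theorem stmt_5 (n : ℕ) (hn : 1 ≤ n) :
    (Nat.card {π : Overpartition n // π.plain ≠ 0 ∧
        Even ((π.overlined.filter (fun x => ∃ y ∈ π.plain, x ≤ y)).card)} : ℤ) -
      Nat.card {π : Overpartition n // π.plain ≠ 0 ∧
        Odd ((π.overlined.filter (fun x => ∃ y ∈ π.plain, x ≤ y)).card)} =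
    Nat.card {p : n.Partition // p.parts.Nodup} := by
  classical
  open Overpartition in
  have hE : (Nat.card {π : Overpartition n // π.plain ≠ 0 ∧
      Even ((π.overlined.filter (fun x => ∃ y ∈ π.plain, x ≤ y)).card)})
      = (Finset.univ.filter (fun π : Overpartition n => π.plain ≠ 0 ∧ Even π.ell)).card := by
    rw [Nat.card_eq_fintype_card, Fintype.card_subtype]
    rfl
  have hO : (Nat.card {π : Overpartition n // π.plain ≠ 0 ∧
      Odd ((π.overlined.filter (fun x => ∃ y ∈ π.plain, x ≤ y)).card)})
      = (Finset.univ.filter (fun π : Overpartition n => π.plain ≠ 0 ∧ Odd π.ell)).card := by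
    rw [Nat.card_eq_fintype_card, Fintype.card_subtype]
    rfl
  have hD : (Nat.card {p : n.Partition // p.parts.Nodup})
      = (Finset.univ.filter (fun p : n.Partition => p.parts.Nodup)).card := by
    rw [Nat.card_eq_fintype_card, Fintype.card_subtype]
  rw [hE, hO, hD]
  set S := Finset.univ.filter (fun π : Overpartition n => π.plain ≠ 0) with hS_def
  have hmemS : ∀ π : Overpartition n, π ∈ S ↔ π.plain ≠ 0 := by
    intro π; rw [hS_def, Finset.mem_filter]; simp
  -- The signed sum over S
  have key1 : ∑ π ∈ S, ((-1 : ℤ) ^ π.ell)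
      = ((Finset.univ.filter (fun π : Overpartition n => π.plain ≠ 0 ∧ Even π.ell)).card : ℤ)
        - (Finset.univ.filter (fun π : Overpartition n => π.plain ≠ 0 ∧ Odd π.ell)).card := by
    rw [← Finset.sum_filter_add_sum_filter_not S (fun π => Even π.ell)]
    have e1 : ∑ π ∈ S.filter (fun π => Even π.ell), ((-1 : ℤ) ^ π.ell)
        = ((S.filter (fun π => Even π.ell)).card : ℤ) := by
      rw [Finset.sum_congr rfl (fun π hπ => Even.neg_one_pow (Finset.mem_filter.mp hπ).2)]
      simp
    have e2 : ∑ π ∈ S.filter (fun π => ¬ Even π.ell), ((-1 : ℤ) ^ π.ell)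
        = -((S.filter (fun π => ¬ Even π.ell)).card : ℤ) := by
      rw [Finset.sum_congr rfl
        (fun π hπ => Odd.neg_one_pow (Nat.not_even_iff_odd.mp (Finset.mem_filter.mp hπ).2))]
      simp
    rw [e1, e2]
    have hfE : S.filter (fun π => Even π.ell)
        = Finset.univ.filter (fun π : Overpartition n => π.plain ≠ 0 ∧ Even π.ell) := by
      rw [hS_def, Finset.filter_filter]
    have hfO : S.filter (fun π => ¬ Even π.ell)
        = Finset.univ.filter (fun π : Overpartition n => π.plain ≠ 0 ∧ Odd π.ell) := by
      rw [hS_def, Finset.filter_filter]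
      apply Finset.filter_congr
      intro π _
      simp [Nat.not_even_iff_odd]
    rw [hfE, hfO]
    ring
  -- Split S into fixed points and non-fixed points
  have key2 : ∑ π ∈ S, ((-1 : ℤ) ^ π.ell)
      = ((S.filter (fun π => π.Vset = ∅)).card : ℤ) := by
    rw [← Finset.sum_filter_add_sum_filter_not S (fun π => π.Vset = ∅)]
    have hfixsum : ∑ π ∈ S.filter (fun π => π.Vset = ∅), ((-1 : ℤ) ^ π.ell)
        = ((S.filter (fun π => π.Vset = ∅)).card : ℤ) := by
      have hone : ∀ π ∈ S.filter (fun π => π.Vset = ∅), ((-1 : ℤ) ^ π.ell) = 1 := by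
        intro π hπ
        have h1 : π.plain ≠ 0 := (hmemS π).mp (Finset.mem_filter.mp hπ).1
        rw [ell_of_fix h1 (Finset.mem_filter.mp hπ).2]
        norm_num
      rw [Finset.sum_congr rfl hone]
      simp
    have hinv : ∑ π ∈ S.filter (fun π => ¬ π.Vset = ∅), ((-1 : ℤ) ^ π.ell) = 0 := by
      apply Finset.sum_involution
        (fun π hπ => π.toggle (Finset.nonempty_iff_ne_empty.mpr (Finset.mem_filter.mp hπ).2))
      · intro π hπ
        have h1 : π.plain ≠ 0 := (hmemS π).mp (Finset.mem_filter.mp hπ).1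
        rcases ell_toggle (h2 := Finset.nonempty_iff_ne_empty.mpr (Finset.mem_filter.mp hπ).2) h1
          with h | h
        · rw [h, pow_succ]; ring
        · rw [h, pow_succ]; ring
      · intro π hπ _
        exact toggle_ne
      · intro π hπ
        have h1 : π.plain ≠ 0 := (hmemS π).mp (Finset.mem_filter.mp hπ).1
        exact toggle_toggle h1 _
      · intro π hπ
        have h1 : π.plain ≠ 0 := (hmemS π).mp (Finset.mem_filter.mp hπ).1
        rw [Finset.mem_filter]
        constructor
        · exact (hmemS _).mpr (toggle_plain_ne h1)
        · rw [Vset_toggle h1]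
          exact (Finset.mem_filter.mp hπ).2
    rw [hfixsum, hinv]
    ring
  have key3 := Overpartition.card_fix (n := n) hn
  rw [key2] at key1
  rw [← hS_def] at key3
  omega
end

section
/- For n ≥ 1, the signed count over all overpartitions π of n with no non-overlined parts, weighted by (-1)^{number of overlined parts} (which is all parts), equals H^o(n) - H^e(n), where H^o(n) (resp. H^e(n)) is the number of overpartitions λ of n with at least one non-overlined part, all non-overlined parts equal to a common size s ≥ every overlined part size, and an odd (resp. even) number of overlined parts. -/
open scoped Classical

namespace OP19

variable {n : ℕ}

theorem ext' {π ρ : Overpartition n} (h1 : π.overlined = ρ.overlined)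
    (h2 : π.plain = ρ.plain) : π = ρ := by
  cases π; cases ρ; simp_all

/-- Type A: no plain parts. -/
def A (π : Overpartition n) : Prop := π.plain = 0

/-- Type B: some plain parts, all equal, dominating the overlined parts. -/
def B (π : Overpartition n) : Prop := π.plain ≠ 0 ∧
  (∀ x ∈ π.plain, ∀ y ∈ π.plain, x = y) ∧ (∀ x ∈ π.overlined, ∀ y ∈ π.plain, x ≤ y)

instance : Finite (Overpartition n) := by
  set M : Multiset ℕ := n • (Multiset.range (n + 1)) with hM
  have hover : ∀ π : Overpartition n, π.overlined ∈ (Finset.range (n + 1)).powerset := by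
    intro π
    rw [Finset.mem_powerset]
    intro x hx
    have h1 : x ≤ ∑ y ∈ π.overlined, y :=
      Finset.single_le_sum (f := fun y => y) (fun i _ => Nat.zero_le i) hx
    have h2 := π.sum_eq
    simp only [Finset.mem_range]
    omega
  have hplain : ∀ π : Overpartition n, π.plain ∈ M.powerset.toFinset := by
    intro π
    rw [Multiset.mem_toFinset, Multiset.mem_powerset]
    rw [Multiset.le_iff_count]
    intro v
    by_cases hv : v ∈ π.plain
    · have hv1 : 0 < v := π.plain_pos v hv
      have hv2 : v ≤ π.plain.sum := Multiset.le_sum_of_mem hv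
      have hsum := π.sum_eq
      have hvn : v < n + 1 := by omega
      have hcard : Multiset.card π.plain ≤ π.plain.sum := by
        have := Multiset.card_nsmul_le_sum (s := π.plain) (a := 1)
          (fun x hx => π.plain_pos x hx)
        simpa using this
      have hc1 : Multiset.count v π.plain ≤ Multiset.card π.plain :=
        Multiset.count_le_card v _
      have hcM : Multiset.count v M = n := by
        rw [hM, Multiset.count_nsmul, Multiset.count_eq_one_of_mem
          (Multiset.nodup_range _) (Multiset.mem_range.mpr hvn)]
        omega
      omega
    · simp [Multiset.count_eq_zero_of_notMem hv]
  let F : Overpartition n →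
      {S : Finset ℕ // S ∈ (Finset.range (n + 1)).powerset} ×
      {m : Multiset ℕ // m ∈ M.powerset.toFinset} :=
    fun π => (⟨π.overlined, hover π⟩, ⟨π.plain, hplain π⟩)
  have hinj : Function.Injective F := by
    intro π ρ h
    simp only [F, Prod.mk.injEq, Subtype.mk.injEq] at h
    exact ext' h.1 h.2
  exact Finite.of_injective F hinj

lemma over_nonempty (hn : 1 ≤ n) (π : Overpartition n) (h0 : π.plain = 0) :
    π.overlined.Nonempty := by
  rcases Finset.eq_empty_or_nonempty π.overlined with h | h
  · exfalso
    have := π.sum_eq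
    rw [h0, h] at this
    simp at this
    omega
  · exact h

/-- The sign-reversing involution. -/
noncomputable def phi (hn : 1 ≤ n) (π : Overpartition n) : Overpartition n :=
  if h0 : π.plain = 0 then
    -- move the largest overlined part down to be the unique plain part
    { overlined := π.overlined.erase (π.overlined.max' (over_nonempty hn π h0))
      plain := {π.overlined.max' (over_nonempty hn π h0)}
      over_pos := fun x hx => π.over_pos x (Finset.mem_of_mem_erase hx)
      plain_pos := by
        intro x hx
        rw [Multiset.mem_singleton] at hx
        subst hx
        exact π.over_pos _ (π.overlined.max'_mem _)
      sum_eq := by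
        have h1 : ∑ x ∈ π.overlined.erase (π.overlined.max' (over_nonempty hn π h0)), x
            + (π.overlined.max' (over_nonempty hn π h0)) = ∑ x ∈ π.overlined, x :=
          Finset.sum_erase_add _ _ (π.overlined.max'_mem _)
        have h2 := π.sum_eq
        rw [h0] at h2
        simp only [Multiset.sum_zero] at h2
        simp only [Multiset.sum_singleton]
        omega }
  else
    if h1 : (Multiset.exists_mem_of_ne_zero h0).choose ∈ π.overlined then
      -- overline the common plain value appears among the overlined: unoverline it
      { overlined := π.overlined.erase (Multiset.exists_mem_of_ne_zero h0).choose
        plain := (Multiset.exists_mem_of_ne_zero h0).choose ::ₘ π.plain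
        over_pos := fun x hx => π.over_pos x (Finset.mem_of_mem_erase hx)
        plain_pos := by
          intro x hx
          rw [Multiset.mem_cons] at hx
          rcases hx with h | h
          · subst h; exact π.over_pos _ h1
          · exact π.plain_pos x h
        sum_eq := by
          have h2 : ∑ x ∈ π.overlined.erase (Multiset.exists_mem_of_ne_zero h0).choose, x
              + (Multiset.exists_mem_of_ne_zero h0).choose = ∑ x ∈ π.overlined, x :=
            Finset.sum_erase_add _ _ h1
          have h3 := π.sum_eq
          rw [Multiset.sum_cons]
          omega }
    else
      -- overline one copy of the common plain value
      { overlined := insert (Multiset.exists_mem_of_ne_zero h0).choose π.overlined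
        plain := π.plain.erase (Multiset.exists_mem_of_ne_zero h0).choose
        over_pos := by
          intro x hx
          rw [Finset.mem_insert] at hx
          rcases hx with h | h
          · subst h; exact π.plain_pos _ (Multiset.exists_mem_of_ne_zero h0).choose_spec
          · exact π.over_pos x h
        plain_pos := fun x hx => π.plain_pos x (Multiset.mem_of_mem_erase hx)
        sum_eq := by
          have hs := (Multiset.exists_mem_of_ne_zero h0).choose_spec
          have h2 : ∑ x ∈ insert (Multiset.exists_mem_of_ne_zero h0).choose π.overlined, x
              = (Multiset.exists_mem_of_ne_zero h0).choose + ∑ x ∈ π.overlined, x :=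
            Finset.sum_insert h1
          have h3 : (Multiset.exists_mem_of_ne_zero h0).choose
              + (π.plain.erase (Multiset.exists_mem_of_ne_zero h0).choose).sum
              = π.plain.sum := by
            conv_rhs => rw [← Multiset.cons_erase hs]
            rw [Multiset.sum_cons]
          have h4 := π.sum_eq
          omega }

lemma phi_good (hn : 1 ≤ n) (π : Overpartition n) (h : A π ∨ B π) :
    A (phi hn π) ∨ B (phi hn π) := by
  rw [phi]
  split_ifs with h0 h1
  · -- case A → B
    right
    set s := π.overlined.max' (over_nonempty hn π h0) with hs
    refine ⟨by simp, ?_, ?_⟩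
    · intro x hx y hy
      rw [Multiset.mem_singleton] at hx hy
      omega
    · intro x hx y hy
      rw [Multiset.mem_singleton] at hy
      subst hy
      exact Finset.le_max' _ _ (Finset.mem_of_mem_erase hx)
  · -- case B, s overlined → B
    right
    rcases h with h | h
    · exact absurd h h0
    set s := (Multiset.exists_mem_of_ne_zero h0).choose with hsdef
    have hs : s ∈ π.plain := (Multiset.exists_mem_of_ne_zero h0).choose_spec
    obtain ⟨-, heq, hle⟩ := h
    refine ⟨by simp, ?_, ?_⟩
    · have hall : ∀ z ∈ s ::ₘ π.plain, z = s := by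
        intro z hz
        rcases Multiset.mem_cons.mp hz with h | h
        · exact h
        · exact heq z h s hs
      intro x hx y hy
      rw [hall x hx, hall y hy]
    · intro x hx y hy
      rw [Multiset.mem_cons] at hy
      have hx' : x ∈ π.overlined := Finset.mem_of_mem_erase hx
      rcases hy with h' | h'
      · subst h'; exact hle x hx' s hs
      · exact hle x hx' y h'
  · -- case B, s not overlined
    rcases h with h | h
    · exact absurd h h0
    set s := (Multiset.exists_mem_of_ne_zero h0).choose with hsdef
    have hs : s ∈ π.plain := (Multiset.exists_mem_of_ne_zero h0).choose_spec
    obtain ⟨-, heq, hle⟩ := h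
    by_cases h2 : π.plain.erase s = 0
    · left
      exact h2
    · right
      refine ⟨h2, ?_, ?_⟩
      · intro x hx y hy
        exact heq x (Multiset.mem_of_mem_erase hx) y (Multiset.mem_of_mem_erase hy)
      · intro x hx y hy
        have hy' : y ∈ π.plain := Multiset.mem_of_mem_erase hy
        rw [Finset.mem_insert] at hx
        rcases hx with h' | h'
        · subst h'; exact le_of_eq (heq _ hs y hy')
        · exact hle x h' y hy'

lemma phi_card (hn : 1 ≤ n) (π : Overpartition n) :
    (phi hn π).overlined.card + 1 = π.overlined.card ∨
    π.overlined.card + 1 = (phi hn π).overlined.card := by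
  rw [phi]
  split_ifs with h0 h1
  · left; exact Finset.card_erase_add_one (π.overlined.max'_mem _)
  · left; exact Finset.card_erase_add_one h1
  · right; exact (Finset.card_insert_of_notMem h1).symm

lemma phi_spec_A (hn : 1 ≤ n) (π : Overpartition n) (h0 : π.plain = 0) :
    (phi hn π).overlined = π.overlined.erase (π.overlined.max' (over_nonempty hn π h0)) ∧
    (phi hn π).plain = {π.overlined.max' (over_nonempty hn π h0)} := by
  rw [phi, dif_pos h0]
  exact ⟨rfl, rfl⟩

lemma phi_spec_B1 (hn : 1 ≤ n) (π : Overpartition n) (h0 : ¬ π.plain = 0)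
    (h1 : (Multiset.exists_mem_of_ne_zero h0).choose ∈ π.overlined) :
    (phi hn π).overlined = π.overlined.erase (Multiset.exists_mem_of_ne_zero h0).choose ∧
    (phi hn π).plain = (Multiset.exists_mem_of_ne_zero h0).choose ::ₘ π.plain := by
  rw [phi, dif_neg h0, dif_pos h1]
  exact ⟨rfl, rfl⟩

lemma phi_spec_B2 (hn : 1 ≤ n) (π : Overpartition n) (h0 : ¬ π.plain = 0)
    (h1 : (Multiset.exists_mem_of_ne_zero h0).choose ∉ π.overlined) :
    (phi hn π).overlined = insert (Multiset.exists_mem_of_ne_zero h0).choose π.overlined ∧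
    (phi hn π).plain = π.plain.erase (Multiset.exists_mem_of_ne_zero h0).choose := by
  rw [phi, dif_neg h0, dif_neg h1]
  exact ⟨rfl, rfl⟩

lemma phi_phi (hn : 1 ≤ n) (π : Overpartition n) (h : A π ∨ B π) :
    phi hn (phi hn π) = π := by
  rcases h with hA | hB
  · -- case A
    have h0 : π.plain = 0 := hA
    set s := π.overlined.max' (over_nonempty hn π h0) with hsdef
    have hsmem : s ∈ π.overlined := π.overlined.max'_mem _
    obtain ⟨ho, hp⟩ := phi_spec_A hn π h0
    have h0' : ¬ (phi hn π).plain = 0 := by rw [hp]; simp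
    have hc : (Multiset.exists_mem_of_ne_zero h0').choose = s := by
      have hmem2 : (Multiset.exists_mem_of_ne_zero h0').choose ∈
          ({π.overlined.max' (over_nonempty hn π h0)} : Multiset ℕ) := by
        rw [← hp]; exact (Multiset.exists_mem_of_ne_zero h0').choose_spec
      rw [Multiset.mem_singleton] at hmem2
      exact hmem2
    have h1' : (Multiset.exists_mem_of_ne_zero h0').choose ∉ (phi hn π).overlined := by
      rw [hc, ho]; exact Finset.notMem_erase _ _
    obtain ⟨ho2, hp2⟩ := phi_spec_B2 hn (phi hn π) h0' h1'
    refine ext' ?_ ?_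
    · rw [ho2, hc, ho, Finset.insert_erase hsmem]
    · rw [hp2, hc, hp, h0]
      simp [hsdef]
  · obtain ⟨h0, heq, hle⟩ := hB
    have h0 : ¬ π.plain = 0 := h0
    set s := (Multiset.exists_mem_of_ne_zero h0).choose with hsdef
    have hs : s ∈ π.plain := (Multiset.exists_mem_of_ne_zero h0).choose_spec
    by_cases h1 : s ∈ π.overlined
    · -- case B1
      obtain ⟨ho, hp⟩ := phi_spec_B1 hn π h0 h1
      have h0' : ¬ (phi hn π).plain = 0 := by rw [hp]; simp
      have hc : (Multiset.exists_mem_of_ne_zero h0').choose = s := by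
        have hmem2 : (Multiset.exists_mem_of_ne_zero h0').choose ∈
            (Multiset.exists_mem_of_ne_zero h0).choose ::ₘ π.plain := by
          rw [← hp]; exact (Multiset.exists_mem_of_ne_zero h0').choose_spec
        rcases Multiset.mem_cons.mp hmem2 with h | h
        · exact h
        · exact heq _ h s hs
      have h1' : (Multiset.exists_mem_of_ne_zero h0').choose ∉ (phi hn π).overlined := by
        rw [hc, ho]; exact Finset.notMem_erase _ _
      obtain ⟨ho2, hp2⟩ := phi_spec_B2 hn (phi hn π) h0' h1'
      refine ext' ?_ ?_
      · rw [ho2, hc, ho, Finset.insert_erase h1]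
      · rw [hp2, hc, hp, Multiset.erase_cons_head]
    · -- case B2
      obtain ⟨ho, hp⟩ := phi_spec_B2 hn π h0 h1
      by_cases h2 : π.plain.erase s = 0
      · -- the image is of type A
        have h0' : (phi hn π).plain = 0 := by rw [hp, ← hsdef, h2]
        obtain ⟨ho2, hp2⟩ := phi_spec_A hn (phi hn π) h0'
        have hmax : (phi hn π).overlined.max' (over_nonempty hn (phi hn π) h0') = s := by
          apply le_antisymm
          · apply Finset.max'_le
            intro x hx
            rw [ho, Finset.mem_insert] at hx
            rcases hx with h | h
            · exact le_of_eq h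
            · exact hle x h s hs
          · apply Finset.le_max'
            rw [ho]
            exact Finset.mem_insert_self _ _
        have hpeq : π.plain = {s} := by
          conv_lhs => rw [← Multiset.cons_erase hs]
          rw [h2]
          rfl
        refine ext' ?_ ?_
        · rw [ho2, hmax, ho, Finset.erase_insert h1]
        · rw [hp2, hmax, hpeq]
      · -- the image is of type B again
        have h0' : ¬ (phi hn π).plain = 0 := by rw [hp, ← hsdef]; exact h2
        have hc : (Multiset.exists_mem_of_ne_zero h0').choose = s := by
          have hmem2 : (Multiset.exists_mem_of_ne_zero h0').choose ∈
              π.plain.erase (Multiset.exists_mem_of_ne_zero h0).choose := by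
            rw [← hp]; exact (Multiset.exists_mem_of_ne_zero h0').choose_spec
          exact heq _ (Multiset.mem_of_mem_erase hmem2) s hs
        have h1' : (Multiset.exists_mem_of_ne_zero h0').choose ∈ (phi hn π).overlined := by
          rw [hc, ho]
          exact Finset.mem_insert_self _ _
        obtain ⟨ho2, hp2⟩ := phi_spec_B1 hn (phi hn π) h0' h1'
        refine ext' ?_ ?_
        · rw [ho2, hc, ho, Finset.erase_insert h1]
        · rw [hp2, hc, hp, Multiset.cons_erase hs]

end OP19

theorem stmt_19 (n : ℕ) (hn : 1 ≤ n) :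
    (Nat.card {π : Overpartition n // π.plain = 0 ∧ Even π.overlined.card} : ℤ) -
      Nat.card {π : Overpartition n // π.plain = 0 ∧ Odd π.overlined.card} =
    (Nat.card {lam : Overpartition n // lam.plain ≠ 0 ∧
        (∀ x ∈ lam.plain, ∀ y ∈ lam.plain, x = y) ∧
        (∀ x ∈ lam.overlined, ∀ y ∈ lam.plain, x ≤ y) ∧
        Odd lam.overlined.card} : ℤ) -
      Nat.card {lam : Overpartition n // lam.plain ≠ 0 ∧
        (∀ x ∈ lam.plain, ∀ y ∈ lam.plain, x = y) ∧
        (∀ x ∈ lam.overlined, ∀ y ∈ lam.plain, x ≤ y) ∧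
        Even lam.overlined.card} := by
  classical
  have par1 : ∀ π : Overpartition n, Even π.overlined.card →
      Odd ((OP19.phi hn π).overlined.card) := by
    intro π h
    rcases OP19.phi_card hn π with h' | h' <;>
      (rw [Nat.even_iff] at h; rw [Nat.odd_iff]; omega)
  have par2 : ∀ π : Overpartition n, Odd π.overlined.card →
      Even ((OP19.phi hn π).overlined.card) := by
    intro π h
    rcases OP19.phi_card hn π with h' | h' <;>
      (rw [Nat.odd_iff] at h; rw [Nat.even_iff]; omega)
  have e : {π : Overpartition n // (OP19.A π ∨ OP19.B π) ∧ Even π.overlined.card} ≃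
           {π : Overpartition n // (OP19.A π ∨ OP19.B π) ∧ Odd π.overlined.card} :=
    { toFun := fun x => ⟨OP19.phi hn x.1, OP19.phi_good hn x.1 x.2.1, par1 x.1 x.2.2⟩
      invFun := fun x => ⟨OP19.phi hn x.1, OP19.phi_good hn x.1 x.2.1, par2 x.1 x.2.2⟩
      left_inv := fun x => Subtype.ext (OP19.phi_phi hn x.1 x.2.1)
      right_inv := fun x => Subtype.ext (OP19.phi_phi hn x.1 x.2.1) }
  have key := Nat.card_congr e
  have hdisj : Disjoint (α := Overpartition n → Prop) OP19.A OP19.B := by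
    rw [Pi.disjoint_iff]
    intro π
    rw [Prop.disjoint_iff]
    rintro ⟨h1, h2, -⟩
    exact h2 h1
  have split : ∀ Q : Overpartition n → Prop,
      Nat.card {π : Overpartition n // (OP19.A π ∨ OP19.B π) ∧ Q π} =
      Nat.card {π : Overpartition n // OP19.A π ∧ Q π} +
      Nat.card {π : Overpartition n // OP19.B π ∧ Q π} := by
    intro Q
    rw [← Nat.card_sum]
    apply Nat.card_congr
    refine (Equiv.subtypeEquivRight fun x => ?_).trans
      (subtypeOrEquiv _ _ ?_)
    · tauto
    · rw [Pi.disjoint_iff]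
      intro π
      rw [Prop.disjoint_iff]
      rintro ⟨⟨h1, -⟩, ⟨h2, -⟩, -⟩
      exact h2 h1
  have hAe : Nat.card {π : Overpartition n // OP19.A π ∧ Even π.overlined.card} =
      Nat.card {π : Overpartition n // π.plain = 0 ∧ Even π.overlined.card} := rfl
  have hAo : Nat.card {π : Overpartition n // OP19.A π ∧ Odd π.overlined.card} =
      Nat.card {π : Overpartition n // π.plain = 0 ∧ Odd π.overlined.card} := rfl
  have hBe : Nat.card {π : Overpartition n // OP19.B π ∧ Even π.overlined.card} =
      Nat.card {lam : Overpartition n // lam.plain ≠ 0 ∧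
        (∀ x ∈ lam.plain, ∀ y ∈ lam.plain, x = y) ∧
        (∀ x ∈ lam.overlined, ∀ y ∈ lam.plain, x ≤ y) ∧
        Even lam.overlined.card} :=
    Nat.card_congr (Equiv.subtypeEquivRight fun x => by unfold OP19.B; tauto)
  have hBo : Nat.card {π : Overpartition n // OP19.B π ∧ Odd π.overlined.card} =
      Nat.card {lam : Overpartition n // lam.plain ≠ 0 ∧
        (∀ x ∈ lam.plain, ∀ y ∈ lam.plain, x = y) ∧
        (∀ x ∈ lam.overlined, ∀ y ∈ lam.plain, x ≤ y) ∧
        Odd lam.overlined.card} :=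
    Nat.card_congr (Equiv.subtypeEquivRight fun x => by unfold OP19.B; tauto)
  rw [split, split, hAe, hAo, hBe, hBo] at key
  omega
end
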